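/- Let V be a type, d : V → V → ℝ satisfy the directed triangle inequality, and R be a finite set of vertices. Suppose vertices u, v, r ∈ V satisfy 2·d(r,v) + d(u,r) ≤ 2·d(u,v) + d(r,u), and suppose there exists r₁ ∈ R with 2·d(r,r₁) + d(r₁,u) ≤ 2·d(r,u) + d(u,r₁) (i.e., u ∉ B²_out(r) with eliminator set R). Then there exists r₁ ∈ R such that d(r₁,u) + d(u,r₁) ≤ 4·(d(u,v) + d(v,u)). -/
import Mathlib

/-- Two-layer lemma (as in the proof of Lemma 5.3): if `2·d(r,v) + d(u,r) ≤ 2·d(u,v) + d(r,u)`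
and `u ∉ B²_out(r)` (witnessed by some `r₁ ∈ R`), then some `r₁ ∈ R` has
`d(r₁⇌u) ≤ 4·d(u⇌v)`. -/
theorem two_layer_four_approx {V : Type*} (d : V → V → ℝ)
    (htri : ∀ a b c : V, d a c ≤ d a b + d b c)
    (R : Finset V) (u v r : V)
    (h1 : 2 * d r v + d u r ≤ 2 * d u v + d r u)
    (h2 : ∃ r₁ ∈ R, 2 * d r r₁ + d r₁ u ≤ 2 * d r u + d u r₁) :
    ∃ r₁ ∈ R, d r₁ u + d u r₁ ≤ 4 * (d u v + d v u) := by
  obtain ⟨r₁, hr₁, h3⟩ := h2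
  refine ⟨r₁, hr₁, ?_⟩
  have t1 := htri u r₁ r
  have t2 := htri u r r₁
  have t3 := htri r v u
  linarith
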